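/- arXiv:1607.05053 — 4 statements merged into one kernel-verified Lean document; each statement's English description precedes it below -/
import Mathlib

section
/- Let A_1, …, A_n be finite subsets of an abelian group G. Then (E^+(⋃_{i=1}^n A_i))^{1/4} ≤ Σ_{i=1}^n (E^+(A_i))^{1/4}, where E^+ denotes additive energy. -/
open Finset Pointwise

/-- Additive energy between finite sets `A` and `B`: the number of quadruples
`(a, a', b, b') ∈ A × A × B × B` with `a + b = a' + b'`. -/
def addE {G : Type*} [AddCommGroup G] [DecidableEq G] (A B : Finset G) : ℕ :=
  (((A ×ˢ A) ×ˢ B ×ˢ B).filter fun x => x.1.1 + x.2.1 = x.1.2 + x.2.2).card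

section Aux

variable {G : Type*} [AddCommGroup G] [DecidableEq G]

/-- The number of quadruples `(p, q, r, s) ∈ P × Q × R × S` with `p + q = r + s`. -/
private def quadE (P Q R S : Finset G) : ℕ :=
  (((P ×ˢ Q) ×ˢ R ×ˢ S).filter fun x => x.1.1 + x.1.2 = x.2.1 + x.2.2).card

/-- Number of representations of `x` as a difference of two elements of `A`. -/
private def ddE (A : Finset G) (x : G) : ℕ := ((A ×ˢ A).filter fun p => p.1 - p.2 = x).card

private lemma countPair {β γ : Type*} (P : Finset β) (Q : Finset γ) (k₁ : β → G) (k₂ : γ → G)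
    (X : Finset G) (h : ∀ p ∈ P, k₁ p ∈ X) :
    ((P ×ˢ Q).filter fun x => k₁ x.1 = k₂ x.2).card
      = ∑ x ∈ X, (P.filter fun p => k₁ p = x).card * (Q.filter fun q => k₂ q = x).card := by
  rw [Finset.card_eq_sum_card_fiberwise (f := fun y => k₁ y.1) (t := X)
      (fun y hy => h y.1 (Finset.mem_product.1 (Finset.mem_filter.1 hy).1).1)]
  refine Finset.sum_congr rfl fun x hx => ?_
  rw [Finset.filter_filter]
  have : ((P ×ˢ Q).filter fun y => k₁ y.1 = k₂ y.2 ∧ k₁ y.1 = x)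
      = (P.filter fun p => k₁ p = x) ×ˢ (Q.filter fun q => k₂ q = x) := by
    ext ⟨p, q⟩
    simp only [Finset.mem_filter, Finset.mem_product]
    aesop
  rw [this, Finset.card_product]

private lemma addE_eq_quadE (A B : Finset G) : addE A B = quadE A B A B :=
  Finset.card_equiv (Equiv.prodProdProdComm G G G G)
    (by rintro ⟨⟨a, b⟩, c, d⟩; simp [Equiv.prodProdProdComm]; tauto)

private lemma quadE_sq_le (A B C D : Finset G) : quadE A B C D ^ 2 ≤ addE A B * addE C D := by
  set X := (A + B) ∪ (C + D) with hX
  have hmAB : ∀ p ∈ A ×ˢ B, p.1 + p.2 ∈ X := fun p hp => by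
    obtain ⟨h1, h2⟩ := Finset.mem_product.1 hp
    exact Finset.mem_union_left _ (Finset.add_mem_add h1 h2)
  have hmCD : ∀ p ∈ C ×ˢ D, p.1 + p.2 ∈ X := fun p hp => by
    obtain ⟨h1, h2⟩ := Finset.mem_product.1 hp
    exact Finset.mem_union_right _ (Finset.add_mem_add h1 h2)
  have h1 : quadE A B C D = ∑ x ∈ X,
      ((A ×ˢ B).filter fun p => p.1 + p.2 = x).card *
      ((C ×ˢ D).filter fun p => p.1 + p.2 = x).card :=
    countPair (A ×ˢ B) (C ×ˢ D) (fun p => p.1 + p.2) (fun p => p.1 + p.2) X hmAB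
  have h2 : ∑ x ∈ X, ((A ×ˢ B).filter fun p => p.1 + p.2 = x).card ^ 2 = addE A B := by
    rw [addE_eq_quadE]
    simp_rw [sq]
    exact (countPair (A ×ˢ B) (A ×ˢ B) (fun p => p.1 + p.2) (fun p => p.1 + p.2) X hmAB).symm
  have h3 : ∑ x ∈ X, ((C ×ˢ D).filter fun p => p.1 + p.2 = x).card ^ 2 = addE C D := by
    rw [addE_eq_quadE]
    simp_rw [sq]
    exact (countPair (C ×ˢ D) (C ×ˢ D) (fun p => p.1 + p.2) (fun p => p.1 + p.2) X hmCD).symm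
  rw [h1, ← h2, ← h3]
  exact Finset.sum_mul_sq_le_sq_mul_sq X _ _

private lemma ee_eq_ddE (B : Finset G) (x : G) :
    ((B ×ˢ B).filter fun q => q.2 - q.1 = x).card = ddE B x :=
  Finset.card_equiv (Equiv.prodComm G G) (by rintro ⟨a, b⟩; simp [Equiv.prodComm]; tauto)

private lemma addE_eq_sub (A B : Finset G) :
    addE A B = (((A ×ˢ A) ×ˢ B ×ˢ B).filter
      fun x => x.1.1 - x.1.2 = x.2.2 - x.2.1).card := by
  unfold addE
  congr 1
  apply Finset.filter_congr
  rintro ⟨⟨a₁, a₂⟩, b₁, b₂⟩ _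
  rw [sub_eq_sub_iff_add_eq_add, add_comm b₂ a₂]

private lemma sum_ddE_sq (A : Finset G) (X : Finset G) (h : ∀ p ∈ A ×ˢ A, p.1 - p.2 ∈ X) :
    ∑ x ∈ X, ddE A x ^ 2 = addE A A := by
  simp_rw [ddE, sq]
  rw [← countPair (A ×ˢ A) (A ×ˢ A) (fun p => p.1 - p.2) (fun p => p.1 - p.2) X h]
  refine Finset.card_equiv ((Equiv.refl (G × G)).prodCongr (Equiv.prodComm G G)) ?_
  rintro ⟨⟨a, b⟩, c, d⟩
  simp only [Finset.mem_filter, Finset.mem_product, Equiv.prodCongr_apply, Equiv.refl_apply,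
    Equiv.prodComm_apply, Prod.swap_prod_mk, Prod.map_apply]
  rw [sub_eq_sub_iff_add_eq_add, add_comm c b]
  tauto

private lemma addE_sq_le (A B : Finset G) : addE A B ^ 2 ≤ addE A A * addE B B := by
  set X := (A - A) ∪ (B - B) with hXdef
  have hA : ∀ p ∈ A ×ˢ A, p.1 - p.2 ∈ X := fun p hp => by
    obtain ⟨h1, h2⟩ := Finset.mem_product.1 hp
    exact Finset.mem_union_left _ (Finset.sub_mem_sub h1 h2)
  have hB : ∀ p ∈ B ×ˢ B, p.1 - p.2 ∈ X := fun p hp => by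
    obtain ⟨h1, h2⟩ := Finset.mem_product.1 hp
    exact Finset.mem_union_right _ (Finset.sub_mem_sub h1 h2)
  have h1 : addE A B = ∑ x ∈ X, ddE A x * ddE B x := by
    rw [addE_eq_sub,
      countPair (A ×ˢ A) (B ×ˢ B) (fun p => p.1 - p.2) (fun q => q.2 - q.1) X hA]
    exact Finset.sum_congr rfl fun x _ => by rw [ee_eq_ddE]; rfl
  rw [h1, ← sum_ddE_sq A X hA, ← sum_ddE_sq B X hB]
  exact Finset.sum_mul_sq_le_sq_mul_sq X _ _

private lemma quadE_union_le (n : ℕ) (A : Fin n → Finset G) :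
    quadE (Finset.univ.biUnion A) (Finset.univ.biUnion A) (Finset.univ.biUnion A)
      (Finset.univ.biUnion A)
    ≤ ∑ p : (Fin n × Fin n) × Fin n × Fin n,
        quadE (A p.1.1) (A p.1.2) (A p.2.1) (A p.2.2) := by
  unfold quadE
  set U := Finset.univ.biUnion A with hU
  calc (((U ×ˢ U) ×ˢ U ×ˢ U).filter fun x => x.1.1 + x.1.2 = x.2.1 + x.2.2).card
      ≤ ((Finset.univ : Finset ((Fin n × Fin n) × Fin n × Fin n)).biUnion fun p =>
          ((A p.1.1 ×ˢ A p.1.2) ×ˢ A p.2.1 ×ˢ A p.2.2).filter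
            fun x => x.1.1 + x.1.2 = x.2.1 + x.2.2).card := by
        apply Finset.card_le_card
        rintro ⟨⟨a, b⟩, c, d⟩ hx
        simp only [Finset.mem_filter, Finset.mem_product, Finset.mem_biUnion, hU,
          Finset.mem_univ, true_and] at hx ⊢
        obtain ⟨⟨⟨⟨i, ha⟩, j, hb⟩, ⟨k, hc⟩, l, hd⟩, hcond⟩ := hx
        exact ⟨((i, j), k, l), ⟨⟨ha, hb⟩, hc, hd⟩, hcond⟩
    _ ≤ _ := Finset.card_biUnion_le

end Aux

theorem stmt3 {G : Type*} [AddCommGroup G] [DecidableEq G] (n : ℕ) (A : Fin n → Finset G) :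
    (addE (Finset.univ.biUnion A) (Finset.univ.biUnion A) : ℝ) ^ ((1 : ℝ) / 4) ≤
      ∑ i : Fin n, (addE (A i) (A i) : ℝ) ^ ((1 : ℝ) / 4) := by
  classical
  set e : Fin n → ℝ := fun i => (addE (A i) (A i) : ℝ) ^ ((1 : ℝ) / 4) with he_def
  have he0 : ∀ i, 0 ≤ e i := fun i => Real.rpow_nonneg (Nat.cast_nonneg _) _
  have hE4 : ∀ i, (addE (A i) (A i) : ℝ) = e i ^ 4 := by
    intro i
    rw [he_def]
    rw [← Real.rpow_natCast ((addE (A i) (A i) : ℝ) ^ ((1 : ℝ) / 4)) 4,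
      ← Real.rpow_mul (Nat.cast_nonneg _)]
    norm_num
  set S : ℝ := ∑ i : Fin n, e i with hS_def
  have hS0 : 0 ≤ S := Finset.sum_nonneg fun i _ => he0 i
  -- pointwise bound on quadE in ℝ
  have hq : ∀ p : (Fin n × Fin n) × Fin n × Fin n,
      (quadE (A p.1.1) (A p.1.2) (A p.2.1) (A p.2.2) : ℝ)
        ≤ e p.1.1 * e p.1.2 * e p.2.1 * e p.2.2 := by
    rintro ⟨⟨i, j⟩, k, l⟩
    have h4 : quadE (A i) (A j) (A k) (A l) ^ 4
        ≤ addE (A i) (A i) * addE (A j) (A j) * (addE (A k) (A k) * addE (A l) (A l)) := by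
      calc quadE (A i) (A j) (A k) (A l) ^ 4
          = (quadE (A i) (A j) (A k) (A l) ^ 2) ^ 2 := by ring
        _ ≤ (addE (A i) (A j) * addE (A k) (A l)) ^ 2 :=
            Nat.pow_le_pow_left (quadE_sq_le _ _ _ _) 2
        _ = addE (A i) (A j) ^ 2 * addE (A k) (A l) ^ 2 := by ring
        _ ≤ _ := Nat.mul_le_mul (addE_sq_le _ _) (addE_sq_le _ _)
    refine le_of_pow_le_pow_left₀ (n := 4) (by norm_num)
      (by positivity) ?_
    calc (quadE (A i) (A j) (A k) (A l) : ℝ) ^ 4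
        ≤ (addE (A i) (A i) : ℝ) * addE (A j) (A j) * ((addE (A k) (A k) : ℝ) * addE (A l) (A l)) := by
          exact_mod_cast h4
      _ = (e i * e j * e k * e l) ^ 4 := by
          rw [hE4 i, hE4 j, hE4 k, hE4 l]; ring
  -- expansion of S^4
  have hexp : ∑ p : (Fin n × Fin n) × Fin n × Fin n,
      e p.1.1 * e p.1.2 * e p.2.1 * e p.2.2 = S ^ 4 := by
    have hbase : ∑ q : Fin n × Fin n, e q.1 * e q.2 = S ^ 2 := by
      rw [sq, Finset.sum_mul_sum, Fintype.sum_prod_type]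
    calc ∑ p : (Fin n × Fin n) × Fin n × Fin n, e p.1.1 * e p.1.2 * e p.2.1 * e p.2.2
        = ∑ a : Fin n × Fin n, ∑ b : Fin n × Fin n, (e a.1 * e a.2) * (e b.1 * e b.2) := by
          rw [Fintype.sum_prod_type]; exact Finset.sum_congr rfl fun a _ =>
            Finset.sum_congr rfl fun b _ => by ring
      _ = (∑ a : Fin n × Fin n, e a.1 * e a.2) * ∑ b : Fin n × Fin n, e b.1 * e b.2 :=
          (Finset.sum_mul_sum _ _ _ _).symm
      _ = S ^ 2 * S ^ 2 := by rw [hbase]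
      _ = S ^ 4 := by ring
  -- main chain
  have hmain : (addE (Finset.univ.biUnion A) (Finset.univ.biUnion A) : ℝ) ≤ S ^ 4 := by
    calc (addE (Finset.univ.biUnion A) (Finset.univ.biUnion A) : ℝ)
        = (quadE (Finset.univ.biUnion A) (Finset.univ.biUnion A) (Finset.univ.biUnion A)
            (Finset.univ.biUnion A) : ℝ) := by rw [addE_eq_quadE]
      _ ≤ (∑ p : (Fin n × Fin n) × Fin n × Fin n,
            quadE (A p.1.1) (A p.1.2) (A p.2.1) (A p.2.2) : ℕ) := by
          exact_mod_cast quadE_union_le n A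
      _ = ∑ p : (Fin n × Fin n) × Fin n × Fin n,
            (quadE (A p.1.1) (A p.1.2) (A p.2.1) (A p.2.2) : ℝ) := by push_cast; rfl
      _ ≤ ∑ p : (Fin n × Fin n) × Fin n × Fin n, e p.1.1 * e p.1.2 * e p.2.1 * e p.2.2 :=
          Finset.sum_le_sum fun p _ => hq p
      _ = S ^ 4 := hexp
  calc (addE (Finset.univ.biUnion A) (Finset.univ.biUnion A) : ℝ) ^ ((1 : ℝ) / 4)
      ≤ (S ^ 4) ^ ((1 : ℝ) / 4) := Real.rpow_le_rpow (Nat.cast_nonneg _) hmain (by norm_num)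
    _ = S := by
        rw [← Real.rpow_natCast S 4, ← Real.rpow_mul hS0]
        norm_num
end

section
/- Let G be an abelian group, A ⊆ G finite, K ≥ 1 real, and k ≥ 2 an integer. Suppose E^+(A) ≥ |A|^3/K. Then there exist sets A_* ⊆ A and P ⊆ A−A such that |A_*| ≥ |A|/(8kK), |P| ≤ 8kK|A|, and for every choice of a_1,…,a_k ∈ A_* one has |A ∩ (P+a_1) ∩ ⋯ ∩ (P+a_k)| ≥ |A|/(4K). -/
open Finset Pointwise

namespace Stmt5Proof

variable {G : Type*} [AddCommGroup G] [DecidableEq G]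

/-- Number of representations of `s` as a difference of two elements of `A`. -/
def rr (A : Finset G) (s : G) : ℕ := (A.filter fun c => c - s ∈ A).card

lemma mem_sub_of_rr_pos {A : Finset G} {s : G} (h : 0 < rr A s) : s ∈ A - A := by
  rw [rr, Finset.card_pos] at h
  obtain ⟨c, hc⟩ := h
  rw [Finset.mem_filter] at hc
  exact Finset.mem_sub.2 ⟨c, hc.1, c - s, hc.2, by abel⟩

lemma fiber_card (A : Finset G) (s : G) :
    ((A ×ˢ A).filter fun p => p.1 - p.2 = s).card = rr A s := by
  rw [rr]
  apply Finset.card_nbij' (i := fun p => p.1) (j := fun c => (c, c - s))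
  · intro p hp
    simp only [Finset.mem_coe, Finset.mem_filter, Finset.mem_product] at hp ⊢
    refine ⟨hp.1.1, ?_⟩
    have h : p.1 - s = p.2 := by rw [← hp.2]; abel
    rw [h]; exact hp.1.2
  · intro c hc
    simp only [Finset.mem_coe, Finset.mem_filter, Finset.mem_product] at hc ⊢
    exact ⟨⟨hc.1, hc.2⟩, by abel⟩
  · intro p hp
    simp only [Finset.mem_coe, Finset.mem_filter, Finset.mem_product] at hp
    have h : p.1 - s = p.2 := by rw [← hp.2]; abel
    exact Prod.ext rfl h
  · intro c _; rfl

lemma sum_rr (A : Finset G) : ∑ s ∈ A - A, rr A s = A.card ^ 2 := by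
  have H : ∀ p ∈ A ×ˢ A, (fun q : G × G => q.1 - q.2) p ∈ A - A := by
    intro p hp
    rw [Finset.mem_product] at hp
    exact Finset.mem_sub.2 ⟨p.1, hp.1, p.2, hp.2, rfl⟩
  have h1 := Finset.card_eq_sum_card_fiberwise H
  rw [Finset.card_product] at h1
  calc ∑ s ∈ A - A, rr A s
      = ∑ s ∈ A - A, ((A ×ˢ A).filter fun p => p.1 - p.2 = s).card :=
        Finset.sum_congr rfl fun s _ => (fiber_card A s).symm
    _ = A.card * A.card := h1.symm
    _ = A.card ^ 2 := (sq A.card).symm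

lemma sum_rr_sq (A : Finset G) : ∑ s ∈ A - A, rr A s ^ 2 = addE A A := by
  rw [addE]
  have H : ∀ x ∈ ((A ×ˢ A) ×ˢ A ×ˢ A).filter
      (fun x : (G × G) × G × G => x.1.1 + x.2.1 = x.1.2 + x.2.2),
      (fun x : (G × G) × G × G => x.1.1 - x.1.2) x ∈ A - A := by
    intro x hx
    simp only [Finset.mem_filter, Finset.mem_product] at hx
    exact Finset.mem_sub.2 ⟨x.1.1, hx.1.1.1, x.1.2, hx.1.1.2, rfl⟩
  have h1 := Finset.card_eq_sum_card_fiberwise H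
  have e : ∀ s ∈ A - A,
      ((((A ×ˢ A) ×ˢ A ×ˢ A).filter
        (fun x : (G × G) × G × G => x.1.1 + x.2.1 = x.1.2 + x.2.2)).filter
        (fun x => x.1.1 - x.1.2 = s)).card = rr A s ^ 2 := by
    intro s _
    have hcard : (((A.filter fun c => c - s ∈ A)) ×ˢ (A.filter fun c => c - s ∈ A)).card
        = rr A s ^ 2 := by rw [Finset.card_product, rr, sq]
    rw [← hcard]
    apply Finset.card_nbij' (i := fun x : (G × G) × G × G => (x.1.1, x.2.2))
      (j := fun p : G × G => ((p.1, p.1 - s), (p.2 - s, p.2)))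
    · intro x hx
      simp only [Finset.mem_coe, Finset.mem_filter, Finset.mem_product] at hx ⊢
      obtain ⟨⟨⟨⟨h11, h12⟩, h21, h22⟩, hsum⟩, hfib⟩ := hx
      have key : x.2.2 - x.2.1 = x.1.1 - x.1.2 := by
        rw [sub_eq_sub_iff_add_eq_add, add_comm x.2.2 x.1.2]
        exact hsum.symm
      refine ⟨⟨h11, ?_⟩, h22, ?_⟩
      · have h : x.1.1 - s = x.1.2 := by rw [← hfib]; abel
        rw [h]; exact h12
      · have h : x.2.2 - s = x.2.1 := by rw [← hfib, ← key]; abel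
        rw [h]; exact h21
    · intro p hp
      simp only [Finset.mem_coe, Finset.mem_filter, Finset.mem_product] at hp ⊢
      exact ⟨⟨⟨⟨hp.1.1, hp.1.2⟩, hp.2.2, hp.2.1⟩, by abel⟩, by abel⟩
    · intro x hx
      simp only [Finset.mem_coe, Finset.mem_filter, Finset.mem_product] at hx
      obtain ⟨⟨-, hsum⟩, hfib⟩ := hx
      have key : x.2.2 - x.2.1 = x.1.1 - x.1.2 := by
        rw [sub_eq_sub_iff_add_eq_add, add_comm x.2.2 x.1.2]
        exact hsum.symm
      have e1 : x.1.1 - s = x.1.2 := by rw [← hfib]; abel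
      have e2 : x.2.2 - s = x.2.1 := by rw [← hfib, ← key]; abel
      calc ((x.1.1, x.1.1 - s), (x.2.2 - s, x.2.2))
          = ((x.1.1, x.1.2), (x.2.1, x.2.2)) := by rw [e1, e2]
        _ = x := by simp
    · intro p _; rfl
  rw [h1]
  exact (Finset.sum_congr rfl e).symm

/-- The pairs `(z,a)` in `(A ∩ (A+x))²` whose difference is `τ`-unpopular. -/
noncomputable def badPairs (A : Finset G) (x : G) (τ : ℝ) : Finset (G × G) :=
  ((A.filter fun z => z - x ∈ A) ×ˢ (A.filter fun z => z - x ∈ A)).filter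
    fun p => (rr A (p.1 - p.2) : ℝ) < τ

lemma sum_badPairs (A : Finset G) (τ : ℝ) :
    ∑ x ∈ A - A, (badPairs A x τ).card
      = ∑ s ∈ A - A, if (rr A s : ℝ) < τ then rr A s ^ 2 else 0 := by
  classical
  set T : Finset (G × G × G) := ((A - A) ×ˢ A ×ˢ A).filter
    (fun t : G × G × G => t.2.1 - t.1 ∈ A ∧ t.2.2 - t.1 ∈ A ∧ (rr A (t.2.1 - t.2.2) : ℝ) < τ)
    with hT
  have memT : ∀ t : G × G × G, t ∈ T ↔ (t.1 ∈ A - A ∧ t.2.1 ∈ A ∧ t.2.2 ∈ A) ∧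
      t.2.1 - t.1 ∈ A ∧ t.2.2 - t.1 ∈ A ∧ (rr A (t.2.1 - t.2.2) : ℝ) < τ := by
    intro t
    simp only [hT, Finset.mem_filter, Finset.mem_product]
    try tauto
  have H1 : ∀ t ∈ T, (fun t : G × G × G => t.1) t ∈ A - A := fun t ht => ((memT t).1 ht).1.1
  have h1 := Finset.card_eq_sum_card_fiberwise H1
  have H2 : ∀ t ∈ T, (fun t : G × G × G => t.2.1 - t.2.2) t ∈ A - A := by
    intro t ht
    obtain ⟨⟨-, h21, h22⟩, -⟩ := (memT t).1 ht
    exact Finset.mem_sub.2 ⟨t.2.1, h21, t.2.2, h22, rfl⟩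
  have h2 := Finset.card_eq_sum_card_fiberwise H2
  have e1 : ∀ x ∈ A - A, (T.filter fun t => t.1 = x).card = (badPairs A x τ).card := by
    intro x hx
    apply Finset.card_nbij' (i := fun t : G × G × G => t.2)
      (j := fun p : G × G => (x, p))
    · intro t ht
      rw [Finset.mem_coe, Finset.mem_filter] at ht
      obtain ⟨ht, hfib⟩ := ht
      obtain ⟨⟨-, h21, h22⟩, hz, ha, hbad⟩ := (memT t).1 ht
      rw [hfib] at hz ha
      rw [badPairs]
      simp only [Finset.mem_coe, Finset.mem_filter, Finset.mem_product]
      exact ⟨⟨⟨h21, hz⟩, h22, ha⟩, hbad⟩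
    · intro p hp
      rw [badPairs] at hp
      simp only [Finset.mem_coe, Finset.mem_filter, Finset.mem_product] at hp
      rw [Finset.mem_coe, Finset.mem_filter]
      exact ⟨(memT _).2 ⟨⟨hx, hp.1.1.1, hp.1.2.1⟩, hp.1.1.2, hp.1.2.2, hp.2⟩, rfl⟩
    · intro t ht
      rw [Finset.mem_coe, Finset.mem_filter] at ht
      exact Prod.ext ht.2.symm rfl
    · intro p _; rfl
  have e2 : ∀ s ∈ A - A, (T.filter fun t => t.2.1 - t.2.2 = s).card
      = if (rr A s : ℝ) < τ then rr A s ^ 2 else 0 := by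
    intro s _
    by_cases hb : (rr A s : ℝ) < τ
    · rw [if_pos hb]
      have hcard : (((A.filter fun c => c - s ∈ A)) ×ˢ (A.filter fun c => c - s ∈ A)).card
          = rr A s ^ 2 := by rw [Finset.card_product, rr, sq]
      rw [← hcard]
      apply Finset.card_nbij' (i := fun t : G × G × G => (t.2.1, t.2.1 - t.1))
        (j := fun p : G × G => (p.1 - p.2, p.1, p.1 - s))
      · intro t ht
        rw [Finset.mem_coe, Finset.mem_filter] at ht
        obtain ⟨ht, hfib⟩ := ht
        obtain ⟨⟨-, h21, h22⟩, hz, ha, -⟩ := (memT t).1 ht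
        simp only [Finset.mem_coe, Finset.mem_filter, Finset.mem_product]
        refine ⟨⟨h21, ?_⟩, hz, ?_⟩
        · have h : t.2.1 - s = t.2.2 := by rw [← hfib]; abel
          rw [h]; exact h22
        · have h : t.2.1 - t.1 - s = t.2.2 - t.1 := by rw [← hfib]; abel
          rw [h]; exact ha
      · intro p hp
        simp only [Finset.mem_coe, Finset.mem_filter, Finset.mem_product] at hp
        rw [Finset.mem_coe, Finset.mem_filter]
        have hps : p.1 - (p.1 - s) = s := by abel
        constructor
        · refine (memT _).2 ⟨⟨?_, hp.1.1, hp.1.2⟩, ?_, ?_, ?_⟩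
          · exact Finset.mem_sub.2 ⟨p.1, hp.1.1, p.2, hp.2.1, rfl⟩
          · have h : p.1 - (p.1 - p.2) = p.2 := by abel
            rw [h]; exact hp.2.1
          · have h : p.1 - s - (p.1 - p.2) = p.2 - s := by abel
            rw [h]; exact hp.2.2
          · rw [hps]; exact hb
        · exact hps
      · intro t ht
        rw [Finset.mem_coe, Finset.mem_filter] at ht
        obtain ⟨ht, hfib⟩ := ht
        have ea : t.2.1 - (t.2.1 - t.1) = t.1 := by abel
        have eb : t.2.1 - s = t.2.2 := by rw [← hfib]; abel
        calc (t.2.1 - (t.2.1 - t.1), t.2.1, t.2.1 - s)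
            = (t.1, t.2.1, t.2.2) := by rw [ea, eb]
          _ = t := by simp
      · intro p _
        have h : p.1 - (p.1 - p.2) = p.2 := by abel
        calc (p.1, p.1 - (p.1 - p.2)) = (p.1, p.2) := by rw [h]
          _ = p := by simp
    · rw [if_neg hb]
      rw [Finset.card_eq_zero, Finset.eq_empty_iff_forall_notMem]
      intro t ht
      rw [Finset.mem_filter] at ht
      obtain ⟨ht, hfib⟩ := ht
      obtain ⟨-, -, -, hbad⟩ := (memT t).1 ht
      rw [hfib] at hbad
      exact hb hbad
  calc ∑ x ∈ A - A, (badPairs A x τ).card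
      = ∑ x ∈ A - A, (T.filter fun t => t.1 = x).card := (Finset.sum_congr rfl e1).symm
    _ = T.card := h1.symm
    _ = ∑ s ∈ A - A, (T.filter fun t => t.2.1 - t.2.2 = s).card := h2
    _ = ∑ s ∈ A - A, if (rr A s : ℝ) < τ then rr A s ^ 2 else 0 :=
        Finset.sum_congr rfl e2

lemma sum_badDeg (A : Finset G) (x : G) (τ : ℝ) :
    ∑ a ∈ A.filter (fun z => z - x ∈ A),
      ((A.filter fun z => z - x ∈ A).filter fun z => (rr A (z - a) : ℝ) < τ).card
      = (badPairs A x τ).card := by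
  classical
  have H : ∀ p ∈ badPairs A x τ, (fun p : G × G => p.2) p ∈ A.filter (fun z => z - x ∈ A) := by
    intro p hp
    rw [badPairs] at hp
    simp only [Finset.mem_filter, Finset.mem_product] at hp
    simp only [Finset.mem_filter]
    exact hp.1.2
  have h1 := Finset.card_eq_sum_card_fiberwise H
  rw [h1]
  refine Finset.sum_congr rfl fun a ha => ?_
  symm
  apply Finset.card_nbij' (i := fun p : G × G => p.1) (j := fun z : G => (z, a))
  · intro p hp
    rw [Finset.mem_coe, Finset.mem_filter, badPairs] at hp
    obtain ⟨hp, hfib⟩ := hp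
    simp only [Finset.mem_filter, Finset.mem_product] at hp
    simp only [Finset.mem_coe, Finset.mem_filter]
    rw [hfib] at hp
    exact ⟨hp.1.1, hp.2⟩
  · intro z hz
    simp only [Finset.mem_coe, Finset.mem_filter] at hz ha
    rw [Finset.mem_coe, Finset.mem_filter]
    refine ⟨?_, rfl⟩
    rw [badPairs]
    simp only [Finset.mem_filter, Finset.mem_product]
    exact ⟨⟨⟨hz.1.1, hz.1.2⟩, ha⟩, hz.2⟩
  · intro p hp
    rw [Finset.mem_coe, Finset.mem_filter] at hp
    exact Prod.ext rfl hp.2.symm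
  · intro z _; rfl

end Stmt5Proof

set_option maxHeartbeats 1600000 in
open Stmt5Proof in
theorem stmt5 {G : Type*} [AddCommGroup G] [DecidableEq G] (A : Finset G) (K : ℝ) (hK : 1 ≤ K)
    (k : ℕ) (hk : 2 ≤ k) (hE : (A.card : ℝ) ^ 3 / K ≤ addE A A) :
    ∃ Astar P : Finset G, Astar ⊆ A ∧ P ⊆ A - A ∧
      (A.card : ℝ) / (8 * k * K) ≤ Astar.card ∧
      (P.card : ℝ) ≤ 8 * k * K * A.card ∧
      ∀ a : Fin k → G, (∀ i, a i ∈ Astar) →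
        (A.card : ℝ) / (4 * K) ≤
          ((A.filter fun y => ∀ i, y ∈ P.image (· + a i)).card : ℝ) := by
  classical
  have hK0 : (0 : ℝ) < K := lt_of_lt_of_le one_pos hK
  have hk0 : (0 : ℝ) < (k : ℝ) := by
    have : (0 : ℕ) < k := by omega
    exact_mod_cast this
  have hk2 : (2 : ℝ) ≤ (k : ℝ) := by exact_mod_cast hk
  rcases Nat.eq_zero_or_pos A.card with hm | hm
  · refine ⟨∅, ∅, Finset.empty_subset _, Finset.empty_subset _, ?_, ?_, ?_⟩
    · simp [hm]
    · simp
      positivity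
    · intro a ha
      exact absurd (ha ⟨0, by omega⟩) (Finset.notMem_empty _)
  · have hm0 : (0 : ℝ) < (A.card : ℝ) := by exact_mod_cast hm
    set m : ℝ := (A.card : ℝ) with hmdef
    set τ : ℝ := m / (8 * k * K) with hτdef
    have hτ0 : 0 < τ := by rw [hτdef]; positivity
    -- basic sums
    have hsum1 : ∑ s ∈ A - A, (rr A s : ℝ) = m ^ 2 := by
      rw [hmdef]
      exact_mod_cast congrArg (Nat.cast : ℕ → ℝ) (sum_rr A)
    have hsumE : m ^ 3 / K ≤ ∑ s ∈ A - A, (rr A s : ℝ) ^ 2 := by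
      have h := sum_rr_sq A
      have h2 : ((addE A A : ℕ) : ℝ) = ∑ s ∈ A - A, (rr A s : ℝ) ^ 2 := by
        rw [← h]; push_cast; ring
      rw [← h2]; exact hE
    -- popular x's carry most of the energy
    have hpop : m ^ 3 / (2 * K) ≤
        ∑ s ∈ (A - A).filter (fun s => m / (2 * K) ≤ (rr A s : ℝ)), (rr A s : ℝ) ^ 2 := by
      have hsplit := Finset.sum_filter_add_sum_filter_not (A - A)
        (fun s => m / (2 * K) ≤ (rr A s : ℝ)) (fun s => (rr A s : ℝ) ^ 2)
      have hnot : ∑ s ∈ (A - A).filter (fun s => ¬ (m / (2 * K) ≤ (rr A s : ℝ))),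
          (rr A s : ℝ) ^ 2 ≤ m / (2 * K) * m ^ 2 := by
        calc ∑ s ∈ (A - A).filter (fun s => ¬ (m / (2 * K) ≤ (rr A s : ℝ))), (rr A s : ℝ) ^ 2
            ≤ ∑ s ∈ (A - A).filter (fun s => ¬ (m / (2 * K) ≤ (rr A s : ℝ))),
              m / (2 * K) * (rr A s : ℝ) := by
              refine Finset.sum_le_sum fun s hs => ?_
              have hlt : (rr A s : ℝ) < m / (2 * K) := not_le.1 (Finset.mem_filter.1 hs).2
              have h0 : (0 : ℝ) ≤ (rr A s : ℝ) := Nat.cast_nonneg _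
              nlinarith
          _ ≤ ∑ s ∈ A - A, m / (2 * K) * (rr A s : ℝ) := by
              refine Finset.sum_le_sum_of_subset_of_nonneg (Finset.filter_subset _ _)
                fun s _ _ => by positivity
          _ = m / (2 * K) * ∑ s ∈ A - A, (rr A s : ℝ) := (Finset.mul_sum _ _ _).symm
          _ = m / (2 * K) * m ^ 2 := by rw [hsum1]
      have hid : m / (2 * K) * m ^ 2 = m ^ 3 / (2 * K) := by ring
      have hid2 : m ^ 3 / K - m ^ 3 / (2 * K) = m ^ 3 / (2 * K) := by ring
      linarith
    -- total bad pairs are few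
    have hBadTot : ∑ x ∈ A - A, ((badPairs A x τ).card : ℝ) ≤ τ * m ^ 2 := by
      have h := sum_badPairs A τ
      have hcast : ∑ x ∈ A - A, ((badPairs A x τ).card : ℝ)
          = ∑ s ∈ A - A, (if (rr A s : ℝ) < τ then ((rr A s : ℝ)) ^ 2 else 0) := by
        rw [← Nat.cast_sum, h]
        push_cast [apply_ite (Nat.cast : ℕ → ℝ)]
        rfl
      rw [hcast]
      calc ∑ s ∈ A - A, (if (rr A s : ℝ) < τ then ((rr A s : ℝ)) ^ 2 else 0)
          ≤ ∑ s ∈ A - A, τ * (rr A s : ℝ) := by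
            refine Finset.sum_le_sum fun s _ => ?_
            by_cases hb : (rr A s : ℝ) < τ
            · rw [if_pos hb]
              have h0 : (0 : ℝ) ≤ (rr A s : ℝ) := Nat.cast_nonneg _
              nlinarith
            · rw [if_neg hb]
              positivity
        _ = τ * m ^ 2 := by rw [← Finset.mul_sum, hsum1]
    -- find a good popular x
    have hex : ∃ x ∈ (A - A).filter (fun s => m / (2 * K) ≤ (rr A s : ℝ)),
        ((badPairs A x τ).card : ℝ) ≤ (rr A x : ℝ) ^ 2 / (4 * k) := by
      by_contra hcon
      push_neg at hcon
      have hne : ((A - A).filter (fun s => m / (2 * K) ≤ (rr A s : ℝ))).Nonempty := by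
        rcases Finset.eq_empty_or_nonempty ((A - A).filter (fun s => m / (2 * K) ≤ (rr A s : ℝ)))
          with h | h
        · exfalso
          rw [h, Finset.sum_empty] at hpop
          have : (0 : ℝ) < m ^ 3 / (2 * K) := by positivity
          linarith
        · exact h
      have hlt : ∑ x ∈ (A - A).filter (fun s => m / (2 * K) ≤ (rr A s : ℝ)),
          ((rr A x : ℝ) ^ 2 / (4 * k))
          < ∑ x ∈ (A - A).filter (fun s => m / (2 * K) ≤ (rr A s : ℝ)),
            ((badPairs A x τ).card : ℝ) :=
        Finset.sum_lt_sum_of_nonempty hne hcon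
      have h2 : ∑ x ∈ (A - A).filter (fun s => m / (2 * K) ≤ (rr A s : ℝ)),
          ((badPairs A x τ).card : ℝ) ≤ ∑ x ∈ A - A, ((badPairs A x τ).card : ℝ) :=
        Finset.sum_le_sum_of_subset_of_nonneg (Finset.filter_subset _ _)
          fun _ _ _ => Nat.cast_nonneg _
      have h3 : ∑ x ∈ (A - A).filter (fun s => m / (2 * K) ≤ (rr A s : ℝ)),
          ((rr A x : ℝ) ^ 2 / (4 * k))
          = (∑ x ∈ (A - A).filter (fun s => m / (2 * K) ≤ (rr A s : ℝ)), (rr A x : ℝ) ^ 2)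
            / (4 * k) := by rw [Finset.sum_div]
      have h4 : m ^ 3 / (2 * K) / (4 * k)
          ≤ ∑ x ∈ (A - A).filter (fun s => m / (2 * K) ≤ (rr A s : ℝ)),
            ((rr A x : ℝ) ^ 2 / (4 * k)) := by
        rw [h3]
        gcongr
      have hid : τ * m ^ 2 = m ^ 3 / (2 * K) / (4 * k) := by
        rw [hτdef]; field_simp; ring
      linarith
    obtain ⟨x, hxpop, hxB⟩ := hex
    rw [Finset.mem_filter] at hxpop
    have hrx : m / (2 * K) ≤ (rr A x : ℝ) := hxpop.2
    have hrx0 : (0 : ℝ) < (rr A x : ℝ) := lt_of_lt_of_le (by positivity) hrx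
    -- the fiber A ∩ (A + x) and bad degrees
    have hsplitBad : ∑ a ∈ A.filter (fun z => z - x ∈ A),
        (((A.filter fun z => z - x ∈ A).filter fun z => (rr A (z - a) : ℝ) < τ).card : ℝ)
        = ((badPairs A x τ).card : ℝ) := by
      rw [← Nat.cast_sum, sum_badDeg]
    have hAxcard : ((A.filter fun z => z - x ∈ A).card : ℝ) = (rr A x : ℝ) := by rw [rr]
    -- Astar
    set Astar : Finset G := (A.filter fun z => z - x ∈ A).filter
      (fun a => (((A.filter fun z => z - x ∈ A).filter
        fun z => (rr A (z - a) : ℝ) < τ).card : ℝ) ≤ (rr A x : ℝ) / (2 * k)) with hAstar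
    have hAstarA : Astar ⊆ A := (Finset.filter_subset _ _).trans (Finset.filter_subset _ _)
    have hexcbound : (((A.filter fun z => z - x ∈ A).filter
        (fun a => ¬ ((((A.filter fun z => z - x ∈ A).filter
          fun z => (rr A (z - a) : ℝ) < τ).card : ℝ) ≤ (rr A x : ℝ) / (2 * k)))).card : ℝ)
        ≤ (rr A x : ℝ) / 2 := by
      set exc := (A.filter fun z => z - x ∈ A).filter
        (fun a => ¬ ((((A.filter fun z => z - x ∈ A).filter
          fun z => (rr A (z - a) : ℝ) < τ).card : ℝ) ≤ (rr A x : ℝ) / (2 * k))) with hexc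
      have h1 : (exc.card : ℝ) * ((rr A x : ℝ) / (2 * k))
          ≤ ∑ a ∈ exc, (((A.filter fun z => z - x ∈ A).filter
            fun z => (rr A (z - a) : ℝ) < τ).card : ℝ) := by
        have := Finset.card_nsmul_le_sum exc
          (fun a => (((A.filter fun z => z - x ∈ A).filter
            fun z => (rr A (z - a) : ℝ) < τ).card : ℝ)) ((rr A x : ℝ) / (2 * k))
          (fun a ha => le_of_lt (not_le.1 (Finset.mem_filter.1 ha).2))
        simpa [nsmul_eq_mul] using this
      have h2 : ∑ a ∈ exc, (((A.filter fun z => z - x ∈ A).filter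
            fun z => (rr A (z - a) : ℝ) < τ).card : ℝ)
          ≤ ∑ a ∈ A.filter (fun z => z - x ∈ A), (((A.filter fun z => z - x ∈ A).filter
            fun z => (rr A (z - a) : ℝ) < τ).card : ℝ) :=
        Finset.sum_le_sum_of_subset_of_nonneg (Finset.filter_subset _ _)
          fun _ _ _ => Nat.cast_nonneg _
      have h3 : (exc.card : ℝ) * ((rr A x : ℝ) / (2 * k)) ≤ (rr A x : ℝ) ^ 2 / (4 * k) := by
        rw [hsplitBad] at h2
        linarith
      have hpos : (0 : ℝ) < (rr A x : ℝ) / (2 * k) := by positivity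
      have hid : (rr A x : ℝ) ^ 2 / (4 * k) = ((rr A x : ℝ) / 2) * ((rr A x : ℝ) / (2 * k)) := by
        ring
      rw [hid] at h3
      exact le_of_mul_le_mul_right h3 hpos
    have hAstarCard : (rr A x : ℝ) / 2 ≤ (Astar.card : ℝ) := by
      have hfilt := Finset.card_filter_add_card_filter_not
        (s := A.filter fun z => z - x ∈ A)
        (p := fun a => (((A.filter fun z => z - x ∈ A).filter
          fun z => (rr A (z - a) : ℝ) < τ).card : ℝ) ≤ (rr A x : ℝ) / (2 * k))
      have : (Astar.card : ℝ) + (((A.filter fun z => z - x ∈ A).filter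
          (fun a => ¬ ((((A.filter fun z => z - x ∈ A).filter
            fun z => (rr A (z - a) : ℝ) < τ).card : ℝ) ≤ (rr A x : ℝ) / (2 * k)))).card : ℝ)
          = (rr A x : ℝ) := by
        have hcast := congrArg (Nat.cast : ℕ → ℝ) hfilt
        rw [Nat.cast_add] at hcast
        rw [hcast, hAxcard]
      linarith
    -- the output set P
    set P : Finset G := (A - A).filter (fun s => τ ≤ (rr A s : ℝ)) with hP
    have hPsub : P ⊆ A - A := Finset.filter_subset _ _
    have hPcard : (P.card : ℝ) ≤ 8 * k * K * m := by
      have h1 : (P.card : ℝ) * τ ≤ ∑ s ∈ P, (rr A s : ℝ) := by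
        have := Finset.card_nsmul_le_sum P (fun s => (rr A s : ℝ)) τ
          (fun s hs => (Finset.mem_filter.1 hs).2)
        simpa [nsmul_eq_mul] using this
      have h2 : ∑ s ∈ P, (rr A s : ℝ) ≤ ∑ s ∈ A - A, (rr A s : ℝ) :=
        Finset.sum_le_sum_of_subset_of_nonneg (Finset.filter_subset _ _)
          fun _ _ _ => Nat.cast_nonneg _
      have hid : (8 * k * K * m) * τ = m ^ 2 := by
        rw [hτdef]; field_simp
      have h3 : (P.card : ℝ) * τ ≤ (8 * k * K * m) * τ := by
        rw [hid]; rw [hsum1] at h2; linarith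
      exact le_of_mul_le_mul_right h3 hτ0
    refine ⟨Astar, P, hAstarA, hPsub, ?_, hPcard, ?_⟩
    · -- size of Astar
      have h1 : m / (8 * k * K) ≤ m / (4 * K) := by
        rw [div_le_div_iff₀ (by positivity) (by positivity)]
        nlinarith [mul_nonneg (mul_nonneg hm0.le hK0.le) (by linarith : (0:ℝ) ≤ (k:ℝ) - 2)]
      have h2 : m / (4 * K) ≤ (rr A x : ℝ) / 2 := by
        have : m / (2 * K) / 2 = m / (4 * K) := by ring
        linarith
      linarith
    · -- the main property
      intro a ha
      have haA : ∀ i, (a i ∈ A.filter (fun z => z - x ∈ A)) ∧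
          (((A.filter fun z => z - x ∈ A).filter
            fun z => (rr A (z - a i) : ℝ) < τ).card : ℝ) ≤ (rr A x : ℝ) / (2 * k) := by
        intro i
        have := ha i
        rw [hAstar, Finset.mem_filter] at this
        exact this
      set Good : Finset G := (A.filter fun z => z - x ∈ A).filter
        (fun z => ∀ i, τ ≤ (rr A (z - a i) : ℝ)) with hGood
      have hGsub : Good ⊆ A.filter fun y => ∀ i, y ∈ P.image (· + a i) := by
        intro z hz
        rw [hGood, Finset.mem_filter] at hz
        obtain ⟨hzAx, hzgood⟩ := hz
        have hzA : z ∈ A := (Finset.mem_filter.1 hzAx).1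
        rw [Finset.mem_filter]
        refine ⟨hzA, fun i => ?_⟩
        have hpos : 0 < rr A (z - a i) := by
          have h := lt_of_lt_of_le hτ0 (hzgood i)
          exact_mod_cast h
        refine Finset.mem_image.2 ⟨z - a i, ?_, by abel⟩
        rw [hP, Finset.mem_filter]
        exact ⟨mem_sub_of_rr_pos hpos, hzgood i⟩
      have hGcard : (rr A x : ℝ) / 2 ≤ (Good.card : ℝ) := by
        have hGAx : Good ⊆ A.filter fun z => z - x ∈ A := by
          rw [hGood]; exact Finset.filter_subset _ _
        have hcov : (A.filter fun z => z - x ∈ A) \ Good ⊆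
            (Finset.univ : Finset (Fin k)).biUnion
              (fun i => (A.filter fun z => z - x ∈ A).filter
                fun z => (rr A (z - a i) : ℝ) < τ) := by
          intro z hz
          rw [Finset.mem_sdiff] at hz
          obtain ⟨hzAx, hzn⟩ := hz
          rw [hGood, Finset.mem_filter] at hzn
          push_neg at hzn
          obtain ⟨i, hi⟩ := hzn hzAx
          exact Finset.mem_biUnion.2 ⟨i, Finset.mem_univ _,
            Finset.mem_filter.2 ⟨hzAx, hi⟩⟩
        have hc1 : (((A.filter fun z => z - x ∈ A) \ Good).card : ℝ)
            ≤ ∑ i : Fin k, (((A.filter fun z => z - x ∈ A).filter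
              fun z => (rr A (z - a i) : ℝ) < τ).card : ℝ) := by
          have := (Finset.card_le_card hcov).trans (Finset.card_biUnion_le)
          exact_mod_cast this
        have hc2 : ∑ i : Fin k, (((A.filter fun z => z - x ∈ A).filter
              fun z => (rr A (z - a i) : ℝ) < τ).card : ℝ)
            ≤ ∑ _i : Fin k, (rr A x : ℝ) / (2 * k) :=
          Finset.sum_le_sum fun i _ => (haA i).2
        have hc3 : ∑ _i : Fin k, (rr A x : ℝ) / (2 * k) = (rr A x : ℝ) / 2 := by
          rw [Finset.sum_const, Finset.card_univ, Fintype.card_fin, nsmul_eq_mul]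
          field_simp
        have hc4 : ((A.filter fun z => z - x ∈ A).card : ℝ)
            ≤ (((A.filter fun z => z - x ∈ A) \ Good).card : ℝ) + (Good.card : ℝ) := by
          have := Finset.card_le_card_sdiff_add_card (s := A.filter fun z => z - x ∈ A)
            (t := Good)
          exact_mod_cast this
        rw [hAxcard] at hc4
        linarith
      have hfinal : (Good.card : ℝ)
          ≤ ((A.filter fun y => ∀ i, y ∈ P.image (· + a i)).card : ℝ) := by
        exact_mod_cast Finset.card_le_card hGsub
      have h2 : m / (4 * K) ≤ (rr A x : ℝ) / 2 := by
        have : m / (2 * K) / 2 = m / (4 * K) := by ring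
        linarith
      linarith
end

section
/- Let p be a prime, A ⊆ F_p a finite set, and X ⊆ F_p^*. Then Σ_{x ∈ X} (E^+(A, xA) − |A|^4/p) ≤ p·|A|^2. -/
open Finset Pointwise

lemma addE_eq_addEnergy {G : Type*} [AddCommGroup G] [DecidableEq G] (A B : Finset G) :
    addE A B = Finset.addEnergy A B := rfl

/-- Reindexing: for `x ≠ 0`, the energy with the dilate is a count of quadruples in `A⁴`. -/
lemma addE_image {K : Type*} [Field K] [DecidableEq K] (A : Finset K) (x : K) (hx : x ≠ 0) :
    addE A (A.image fun a => x * a) =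
      (((A ×ˢ A) ×ˢ A ×ˢ A).filter fun q => q.1.1 + x * q.2.1 = q.1.2 + x * q.2.2).card := by
  unfold addE
  refine (Finset.card_bij' (fun q _ => ((q.1.1, q.1.2), (x⁻¹ * q.2.1, x⁻¹ * q.2.2)))
    (fun q _ => ((q.1.1, q.1.2), (x * q.2.1, x * q.2.2))) ?_ ?_ ?_ ?_)
  · rintro ⟨⟨a, a'⟩, b, b'⟩ h
    simp only [mem_filter, mem_product, mem_image] at h ⊢
    obtain ⟨⟨⟨ha, ha'⟩, ⟨c, hc, hcb⟩, ⟨c', hc', hcb'⟩⟩, heq⟩ := h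
    subst hcb hcb'
    refine ⟨⟨⟨ha, ha'⟩, by rwa [inv_mul_cancel_left₀ hx], by rwa [inv_mul_cancel_left₀ hx]⟩, ?_⟩
    simp only [inv_mul_cancel_left₀ hx]
    linear_combination heq
  · rintro ⟨⟨a, a'⟩, b, b'⟩ h
    simp only [mem_filter, mem_product, mem_image] at h ⊢
    obtain ⟨⟨⟨ha, ha'⟩, hb, hb'⟩, heq⟩ := h
    exact ⟨⟨⟨ha, ha'⟩, ⟨b, hb, rfl⟩, ⟨b', hb', rfl⟩⟩, heq⟩
  · rintro ⟨⟨a, a'⟩, b, b'⟩ h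
    simp [mul_inv_cancel_left₀ hx]
  · rintro ⟨⟨a, a'⟩, b, b'⟩ h
    simp [inv_mul_cancel_left₀ hx]

/-- Per-quadruple count of good dilations. -/
lemma count_dilations (p : ℕ) [Fact p.Prime] (a a' b b' : ZMod p) :
    (((univ : Finset (ZMod p)).erase 0).filter fun x => a + x * b = a' + x * b').card
      ≤ (if a = a' ∧ b = b' then p - 1 else 0) + (if b = b' then 0 else 1) := by
  by_cases hb : b = b'
  · subst hb
    by_cases ha : a = a'
    · subst ha
      rw [if_pos (⟨rfl, rfl⟩ : a = a ∧ b = b), if_pos rfl, add_zero]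
      refine le_trans (card_filter_le _ _) ?_
      rw [card_erase_of_mem (mem_univ _), card_univ, ZMod.card]
    · have : (((univ : Finset (ZMod p)).erase 0).filter fun x => a + x * b = a' + x * b) = ∅ := by
        rw [filter_eq_empty_iff]
        intro x _ h
        exact ha (add_right_cancel h)
      simp [this, ha]
  · have h1 : (((univ : Finset (ZMod p)).erase 0).filter
        fun x => a + x * b = a' + x * b').card ≤ 1 := by
      refine card_le_one.mpr ?_
      rintro x hx y hy
      simp only [mem_filter] at hx hy
      have : x * (b - b') = y * (b - b') := by linear_combination hx.2 - hy.2
      exact mul_right_cancel₀ (sub_ne_zero.mpr hb) this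
    calc _ ≤ 1 := h1
    _ ≤ _ := by simp [hb]

lemma myDiagCard {K : Type*} [DecidableEq K] (A : Finset K) :
    ((A ×ˢ A).filter fun z => z.1 = z.2).card = A.card := by
  have : ((A ×ˢ A).filter fun z => z.1 = z.2) = A.image (fun a => (a, a)) := by
    ext ⟨a, b⟩
    simp only [mem_filter, mem_product, mem_image, Prod.mk.injEq]
    constructor
    · rintro ⟨⟨ha, _⟩, rfl⟩; exact ⟨a, ha, rfl, rfl⟩
    · rintro ⟨c, hc, rfl, rfl⟩; exact ⟨⟨hc, hc⟩, rfl⟩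
  rw [this, card_image_of_injective _ (fun a b h => (Prod.mk.injEq _ _ _ _ ▸ h).1)]

theorem stmt10 (p : ℕ) [Fact p.Prime] (A X : Finset (ZMod p)) (hX : (0 : ZMod p) ∉ X) :
    ∑ x ∈ X, ((addE A (A.image fun a => x * a) : ℝ) - (A.card : ℝ) ^ 4 / p) ≤
      (p : ℝ) * A.card ^ 2 := by
  have hp : 0 < p := (Fact.out : p.Prime).pos
  have hp1 : (1 : ℝ) ≤ p := by exact_mod_cast hp
  set S : Finset (ZMod p) := (univ : Finset (ZMod p)).erase 0 with hSdef
  have hXS : X ⊆ S := fun x hx => mem_erase.mpr ⟨fun h => hX (h ▸ hx), mem_univ x⟩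
  set n : ℕ := A.card with hn
  have hnp : n ≤ p := by
    calc n ≤ Fintype.card (ZMod p) := card_le_univ A
    _ = p := ZMod.card p
  -- Cauchy–Schwarz lower bound on each term
  have hnonneg : ∀ x ∈ S, (0:ℝ) ≤ (addE A (A.image fun a => x * a) : ℝ) - (n : ℝ) ^ 4 / p := by
    intro x hxS
    have hx0 : x ≠ 0 := (mem_erase.mp hxS).1
    set B := A.image fun a => x * a with hB
    have hcB : B.card = n := card_image_of_injective _ (mul_right_injective₀ hx0)
    have hCS : n ^ 2 * n ^ 2 ≤ (A + B).card * addE A B := by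
      rw [addE_eq_addEnergy]
      have := Finset.le_card_add_mul_addEnergy A B
      rwa [hcB] at this
    have hAB : (A + B).card ≤ p := by
      calc (A + B).card ≤ Fintype.card (ZMod p) := card_le_univ _
      _ = p := ZMod.card p
    have h4 : (n : ℕ) ^ 4 ≤ p * addE A B :=
      le_trans (by ring_nf; omega) (le_trans hCS (Nat.mul_le_mul_right _ hAB))
    have h4' : ((n : ℝ)) ^ 4 ≤ (p : ℝ) * addE A B := by exact_mod_cast h4
    have hppos : (0:ℝ) < p := by exact_mod_cast hp
    rw [sub_nonneg, div_le_iff₀ hppos]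
    linarith [h4']
  calc ∑ x ∈ X, ((addE A (A.image fun a => x * a) : ℝ) - (n : ℝ) ^ 4 / p)
      ≤ ∑ x ∈ S, ((addE A (A.image fun a => x * a) : ℝ) - (n : ℝ) ^ 4 / p) :=
        sum_le_sum_of_subset_of_nonneg hXS (fun i hi _ => hnonneg i hi)
    _ ≤ (p : ℝ) * n ^ 2 := by
      -- total count bound
      have hScard : S.card = p - 1 := by
        rw [hSdef, card_erase_of_mem (mem_univ _), card_univ, ZMod.card]
      have hsum : ∑ x ∈ S, addE A (A.image fun a => x * a)
          ≤ (p - 1) * n ^ 2 + n ^ 2 * (n ^ 2 - n) := by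
        have hrw : ∀ x ∈ S, addE A (A.image fun a => x * a)
            = (((A ×ˢ A) ×ˢ A ×ˢ A).filter
                fun q => q.1.1 + x * q.2.1 = q.1.2 + x * q.2.2).card := by
          intro x hxS
          exact addE_image A x (mem_erase.mp hxS).1
        rw [Finset.sum_congr rfl hrw]
        have hswap : ∑ x ∈ S, (((A ×ˢ A) ×ˢ A ×ˢ A).filter
              fun q => q.1.1 + x * q.2.1 = q.1.2 + x * q.2.2).card
            = ∑ q ∈ (A ×ˢ A) ×ˢ A ×ˢ A,
              (S.filter fun x => q.1.1 + x * q.2.1 = q.1.2 + x * q.2.2).card := by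
          simp_rw [card_filter]
          exact Finset.sum_comm
        rw [hswap]
        have hb : ∀ q ∈ (A ×ˢ A) ×ˢ A ×ˢ A,
            (S.filter fun x => q.1.1 + x * q.2.1 = q.1.2 + x * q.2.2).card
              ≤ (if q.1.1 = q.1.2 ∧ q.2.1 = q.2.2 then p - 1 else 0)
                + (if q.2.1 = q.2.2 then 0 else 1) := by
          rintro ⟨⟨a, a'⟩, b, b'⟩ _
          exact count_dilations p a a' b b'
        refine le_trans (Finset.sum_le_sum hb) ?_
        rw [Finset.sum_add_distrib]
        have e1 : ∑ q ∈ (A ×ˢ A) ×ˢ A ×ˢ A,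
            (if q.1.1 = q.1.2 ∧ q.2.1 = q.2.2 then p - 1 else 0) = (p - 1) * n ^ 2 := by
          rw [← Finset.sum_filter]
          simp only [sum_const, smul_eq_mul]
          rw [filter_product (fun z : (ZMod p) × (ZMod p) => z.1 = z.2)
            (fun z : (ZMod p) × (ZMod p) => z.1 = z.2), card_product, myDiagCard, ← hn]
          ring
        have e2 : ∑ q ∈ (A ×ˢ A) ×ˢ A ×ˢ A,
            (if q.2.1 = q.2.2 then 0 else 1) ≤ n ^ 2 * (n ^ 2 - n) := by
          have : ∑ q ∈ (A ×ˢ A) ×ˢ A ×ˢ A, (if q.2.1 = q.2.2 then 0 else 1)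
              = (((A ×ˢ A) ×ˢ A ×ˢ A).filter (fun q => ¬ q.2.1 = q.2.2)).card := by
            rw [card_filter]
            exact Finset.sum_congr rfl (fun q _ => by by_cases h : q.2.1 = q.2.2 <;> simp [h])
          rw [this, filter_product_right (fun z : (ZMod p) × (ZMod p) => ¬ z.1 = z.2),
            card_product, card_product]
          have h := card_filter_add_card_filter_not
            (s := A ×ˢ A) (p := fun z : (ZMod p) × (ZMod p) => z.1 = z.2)
          rw [myDiagCard, card_product] at h
          have hd : ((A ×ˢ A).filter fun z => ¬ z.1 = z.2).card = A.card * A.card - A.card := by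
            omega
          rw [hd, hn]
          simp only [pow_two]
          exact Nat.le_refl _
        omega
      -- cast to ℝ and finish
      have hsum' : (∑ x ∈ S, (addE A (A.image fun a => x * a) : ℝ))
          ≤ ((p : ℝ) - 1) * n ^ 2 + (n : ℝ) ^ 2 * ((n : ℝ) ^ 2 - n) := by
        have hn2 : n ≤ n ^ 2 := by nlinarith
        have := hsum
        have hc : ((∑ x ∈ S, addE A (A.image fun a => x * a) : ℕ) : ℝ)
            ≤ (((p - 1) * n ^ 2 + n ^ 2 * (n ^ 2 - n) : ℕ) : ℝ) := by exact_mod_cast this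
        push_cast [Nat.cast_sub hp, Nat.cast_sub hn2] at hc
        push_cast
        linarith
      rw [Finset.sum_sub_distrib, Finset.sum_const, hScard]
      have hnR : (n : ℝ) ≤ p := by exact_mod_cast hnp
      have hn0 : (0:ℝ) ≤ n := Nat.cast_nonneg n
      have hppos : (0:ℝ) < p := by exact_mod_cast hp
      have hcast : ((p - 1 : ℕ) : ℝ) = (p : ℝ) - 1 := by
        push_cast [Nat.cast_sub hp]; ring
      rw [nsmul_eq_mul, hcast]
      have hd1 : ((p:ℝ) - 1) * ((n:ℝ)^4 / p) = (n:ℝ)^4 - (n:ℝ)^4 / p := by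
        field_simp
      have hd2 : (n:ℝ)^4 / p ≤ (n:ℝ)^3 := by
        rw [div_le_iff₀ hppos]
        nlinarith [mul_le_mul_of_nonneg_left hnR (pow_nonneg hn0 3)]
      have hsq : (0:ℝ) ≤ (n:ℝ)^2 := by positivity
      nlinarith [hsum']
end

section
/- Let p be a prime and A ⊆ F_p with |A| > p^{1/2}. Then the set (A−A)/(A−A) = {(a−b)/(c−d) : a,b,c,d ∈ A, c ≠ d} equals all of F_p. -/
open Finset Pointwise


theorem stmt16 (p : ℕ) [Fact p.Prime] (A : Finset (ZMod p))
    (hA : Real.sqrt p < A.card) :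
    ∀ x : ZMod p, ∃ a ∈ A, ∃ b ∈ A, ∃ c ∈ A, ∃ d ∈ A,
      c ≠ d ∧ (a - b) / (c - d) = x := by
  intro x
  have hp2 : p < A.card * A.card := by
    have h0 : (0:ℝ) ≤ (A.card : ℝ) := by positivity
    have h1 : (p : ℝ) < (A.card : ℝ) * A.card := by
      have := Real.sqrt_lt' (x := (p:ℝ)) (y := (A.card : ℝ))
        (by
          rcases Nat.eq_zero_or_pos A.card with h | h
          · exfalso; rw [h] at hA; simp at hA
            exact absurd hA (not_lt.2 (Real.sqrt_nonneg _))
          · exact_mod_cast h)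
      rw [sq] at this
      exact this.1 hA
    exact_mod_cast h1
  -- pigeonhole on (c, a) ↦ a - x * c
  have hmaps : ∀ q ∈ A ×ˢ A, (q.2 - x * q.1) ∈ (Finset.univ : Finset (ZMod p)) := by
    intro q _; exact Finset.mem_univ _
  have hcard : (Finset.univ : Finset (ZMod p)).card < (A ×ˢ A).card := by
    rw [Finset.card_univ, ZMod.card, Finset.card_product]
    exact hp2
  obtain ⟨q1, hq1, q2, hq2, hne, heq⟩ :=
    Finset.exists_ne_map_eq_of_card_lt_of_maps_to hcard hmaps
  obtain ⟨c, a⟩ := q1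
  obtain ⟨d, b⟩ := q2
  simp only [Finset.mem_product] at hq1 hq2
  have hcd : c ≠ d := by
    rintro rfl
    apply hne
    have : a - x * c = b - x * c := heq
    have : a = b := by linear_combination this
    simp [this]
  refine ⟨a, hq1.2, b, hq2.2, c, hq1.1, d, hq2.1, hcd, ?_⟩
  have hcd' : c - d ≠ 0 := sub_ne_zero.mpr hcd
  field_simp
  have : a - x * c = b - x * d := heq
  linear_combination this
end
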